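/- arXiv:1506.01270 — 2 statements merged into one kernel-verified Lean document; each statement's English description precedes it below -/
import Mathlib

section
/- Let p be a prime number, let A be a finitely generated ℤ_p-module, and let G be a group acting on A by ℤ_p-linear automorphisms; extend the action of G to A ⊗_{ℤ_p} (ℚ_p/ℤ_p) by letting G act trivially on ℚ_p/ℤ_p. Then the subgroup of G-invariant elements (A ⊗_{ℤ_p} ℚ_p/ℤ_p)^G is infinite if and only if the submodule of G-invariants A^G contains an element of infinite order. -/
open TensorProduct

namespace Lemma24

variable {p : ℕ} [hp : Fact p.Prime]

local notation "K" => ℚ_[p]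
local notation "Z0" => LinearMap.range (Algebra.linearMap ℤ_[p] ℚ_[p])
local notation "Qt" => (ℚ_[p] ⧸ LinearMap.range (Algebra.linearMap ℤ_[p] ℚ_[p]))

variable {A : Type} [AddCommGroup A] [Module ℤ_[p] A]

/-- `θ : A → K ⊗ A`, `a ↦ 1 ⊗ a`. -/
noncomputable def theta (A : Type) [AddCommGroup A] [Module ℤ_[p] A] :
    A →ₗ[ℤ_[p]] K ⊗[ℤ_[p]] A :=
  TensorProduct.mk ℤ_[p] K A 1

@[simp] lemma theta_apply (a : A) : theta (p := p) A a = (1 : K) ⊗ₜ[ℤ_[p]] a := rfl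

noncomputable def piA (A : Type) [AddCommGroup A] [Module ℤ_[p] A] :
    (K ⊗[ℤ_[p]] A) →ₗ[ℤ_[p]] (Qt ⊗[ℤ_[p]] A) :=
  LinearMap.rTensor A (Submodule.mkQ Z0)

lemma piA_surjective : Function.Surjective (piA (p := p) A) :=
  LinearMap.rTensor_surjective A (Submodule.mkQ_surjective _)

lemma range_rTensor_eq_range_theta :
    LinearMap.range (LinearMap.rTensor A (Algebra.linearMap ℤ_[p] K))
      = LinearMap.range (theta (p := p) A) := by
  apply le_antisymm
  · rintro _ ⟨y, rfl⟩
    induction y using TensorProduct.induction_on with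
    | zero => simp
    | tmul r a =>
        refine ⟨r • a, ?_⟩
        rw [LinearMap.rTensor_tmul, theta_apply, TensorProduct.tmul_smul,
          TensorProduct.smul_tmul', Algebra.smul_def, mul_one, Algebra.linearMap_apply]
    | add x y hx hy =>
        obtain ⟨a, ha⟩ := hx; obtain ⟨b, hb⟩ := hy
        exact ⟨a + b, by simp [ha, hb, map_add]⟩
  · rintro _ ⟨a, rfl⟩
    exact ⟨(1 : ℤ_[p]) ⊗ₜ a, by simp [LinearMap.rTensor_tmul]⟩

lemma ker_piA : LinearMap.ker (piA (p := p) A) = LinearMap.range (theta (p := p) A) := by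
  rw [← range_rTensor_eq_range_theta]
  have h := rTensor_exact (R := ℤ_[p]) A
    (LinearMap.exact_map_mkQ_range (Algebra.linearMap ℤ_[p] K))
    (Submodule.mkQ_surjective _)
  exact LinearMap.exact_iff.mp h

lemma isLocalizedModule_theta :
    IsLocalizedModule (nonZeroDivisors ℤ_[p]) (theta (p := p) A) :=
  (isLocalizedModule_iff_isBaseChange (nonZeroDivisors ℤ_[p]) K _).mpr
    (TensorProduct.isBaseChange ℤ_[p] A K)

lemma theta_eq_zero_iff (a : A) :
    theta (p := p) A a = 0 ↔ ∃ c : ℤ_[p], c ≠ 0 ∧ c • a = 0 := by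
  have := isLocalizedModule_theta (p := p) (A := A)
  rw [IsLocalizedModule.eq_zero_iff (nonZeroDivisors ℤ_[p])]
  constructor
  · rintro ⟨s, hs⟩; exact ⟨s, nonZeroDivisors.ne_zero s.2, hs⟩
  · rintro ⟨c, hc, hca⟩; exact ⟨⟨c, mem_nonZeroDivisors_of_ne_zero hc⟩, hca⟩

/-- finite additive order iff `ℤ_p`-torsion -/
lemma isOfFinAddOrder_iff_torsion (a : A) :
    IsOfFinAddOrder a ↔ ∃ c : ℤ_[p], c ≠ 0 ∧ c • a = 0 := by
  rw [isOfFinAddOrder_iff_nsmul_eq_zero]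
  constructor
  · rintro ⟨n, hn, hna⟩
    exact ⟨(n : ℤ_[p]), Nat.cast_ne_zero.mpr hn.ne', by
      rw [Nat.cast_smul_eq_nsmul]; exact hna⟩
  · rintro ⟨c, hc, hca⟩
    obtain ⟨d, hd⟩ : ∃ d : ℤ_[p], d * c = (p : ℤ_[p]) ^ c.valuation := by
      refine ⟨((PadicInt.unitCoeff hc)⁻¹ : ℤ_[p]ˣ), ?_⟩
      calc (((PadicInt.unitCoeff hc)⁻¹ : ℤ_[p]ˣ) : ℤ_[p]) * c
          = ↑(PadicInt.unitCoeff hc)⁻¹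
            * (↑(PadicInt.unitCoeff hc) * (p : ℤ_[p]) ^ c.valuation) := by
            rw [← PadicInt.unitCoeff_spec hc]
        _ = _ := Units.inv_mul_cancel_left _ _
    refine ⟨p ^ c.valuation, pow_pos hp.1.pos _, ?_⟩
    have h2 : ((p : ℤ_[p]) ^ c.valuation) • a = 0 := by
      rw [← hd, mul_smul, hca, smul_zero]
    rw [← Nat.cast_smul_eq_nsmul (R := ℤ_[p])]
    push_cast
    exact h2

end Lemma24

namespace Lemma24

variable {p : ℕ} [hp : Fact p.Prime]

local notation "K" => ℚ_[p]
local notation "Z0" => LinearMap.range (Algebra.linearMap ℤ_[p] ℚ_[p])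
local notation "Qt" => (ℚ_[p] ⧸ LinearMap.range (Algebra.linearMap ℤ_[p] ℚ_[p]))

variable {A : Type} [AddCommGroup A] [Module ℤ_[p] A]

lemma exists_pow_mul_mem_Z0 (y : K) : ∃ n : ℕ, (p : K) ^ n * y ∈ Z0 := by
  obtain ⟨n, hn⟩ := pow_unbounded_of_one_lt ‖y‖ (by exact_mod_cast hp.1.one_lt : (1:ℝ) < p)
  have hnorm : ‖(p : K) ^ n * y‖ ≤ 1 := by
    rw [norm_mul, norm_pow, Padic.norm_p]
    calc (p:ℝ)⁻¹ ^ n * ‖y‖ ≤ (p:ℝ)⁻¹ ^ n * (p:ℝ) ^ n :=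
          mul_le_mul_of_nonneg_left hn.le (pow_nonneg (inv_nonneg.mpr (by positivity)) n)
      _ = 1 := by
          rw [← mul_pow, inv_mul_cancel₀ (by exact_mod_cast hp.1.pos.ne'), one_pow]
  exact ⟨n, ⟨⟨_, hnorm⟩, rfl⟩⟩

lemma smul_padic (c : ℤ_[p]) (y : K) : c • y = (c : K) * y := by
  rw [Algebra.smul_def, PadicInt.algebraMap_apply]

lemma exists_pow_smul_eq_zero_Qt (x : Qt ⊗[ℤ_[p]] A) :
    ∃ n : ℕ, (p : ℤ_[p]) ^ n • x = 0 := by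
  induction x using TensorProduct.induction_on with
  | zero => exact ⟨0, by simp⟩
  | tmul q a =>
      obtain ⟨y, rfl⟩ := Submodule.mkQ_surjective Z0 q
      obtain ⟨n, hn⟩ := exists_pow_mul_mem_Z0 (p := p) y
      refine ⟨n, ?_⟩
      rw [TensorProduct.smul_tmul', ← map_smul]
      have : (p : ℤ_[p]) ^ n • y = (p : K) ^ n * y := by
        rw [smul_padic]; push_cast; ring
      rw [this]
      rw [show (Submodule.mkQ Z0) ((p:K)^n * y) = 0 from (Submodule.Quotient.mk_eq_zero _).mpr hn]
      rw [TensorProduct.zero_tmul]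
  | add x y hx hy =>
      obtain ⟨n, hn⟩ := hx; obtain ⟨m, hm⟩ := hy
      refine ⟨n + m, ?_⟩
      have key : ∀ (z : Qt ⊗[ℤ_[p]] A) (k l : ℕ), (p:ℤ_[p])^k • z = 0 →
          (p:ℤ_[p])^(k+l) • z = 0 := by
        intro z k l h; rw [pow_add, mul_comm, mul_smul, h, smul_zero]
      have h2 : (p:ℤ_[p])^(n+m) • y = 0 := by rw [add_comm]; exact key y m n hm
      rw [smul_add, key x n m hn, h2, add_zero]

lemma exists_pow_smul_mem_range_theta (w : K ⊗[ℤ_[p]] A) :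
    ∃ n : ℕ, (p : ℤ_[p]) ^ n • w ∈ LinearMap.range (theta (p := p) A) := by
  induction w using TensorProduct.induction_on with
  | zero => exact ⟨0, by simp⟩
  | tmul y a =>
      obtain ⟨n, hn⟩ := exists_pow_mul_mem_Z0 (p := p) y
      obtain ⟨c, hc⟩ := hn
      refine ⟨n, ⟨c • a, ?_⟩⟩
      have hy : (p:ℤ_[p])^n • y = (p:K)^n * y := by rw [smul_padic]; push_cast; ring
      have h3 : (p:ℤ_[p])^n • (y ⊗ₜ[ℤ_[p]] a) = ((p:K)^n * y) ⊗ₜ[ℤ_[p]] a := by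
        rw [TensorProduct.smul_tmul', hy]
      rw [h3, ← hc, Algebra.linearMap_apply, PadicInt.algebraMap_apply,
        theta_apply, TensorProduct.tmul_smul, TensorProduct.smul_tmul', smul_padic, mul_one]
  | add x y hx hy =>
      obtain ⟨n, hn⟩ := hx; obtain ⟨m, hm⟩ := hy
      refine ⟨n + m, ?_⟩
      rw [smul_add]
      refine Submodule.add_mem _ ?_ ?_
      · have : (p:ℤ_[p])^(n+m) • x = (p:ℤ_[p])^m • ((p:ℤ_[p])^n • x) := by
          rw [← mul_smul, ← pow_add, add_comm]
        rw [this]; exact Submodule.smul_mem _ _ hn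
      · have : (p:ℤ_[p])^(n+m) • y = (p:ℤ_[p])^n • ((p:ℤ_[p])^m • y) := by
          rw [← mul_smul, ← pow_add]
        rw [this]; exact Submodule.smul_mem _ _ hm

lemma exists_killer {P : Submodule ℤ_[p] A} (hfg : P.FG)
    (htor : ∀ x ∈ P, ∃ c : ℤ_[p], c ≠ 0 ∧ c • x = 0) :
    ∃ C : ℤ_[p], C ≠ 0 ∧ ∀ x ∈ P, C • x = 0 := by
  classical
  obtain ⟨s, hs⟩ := hfg
  have hsub : (↑s : Set A) ⊆ P := by rw [← hs]; exact Submodule.subset_span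
  choose c hc0 hckill using fun i : ↥s => htor i (hsub i.2)
  refine ⟨∏ i ∈ s.attach, c i, Finset.prod_ne_zero_iff.mpr (fun i _ => hc0 i), ?_⟩
  intro x hx
  rw [← hs] at hx
  refine Submodule.span_induction (p := fun x _ => (∏ i ∈ s.attach, c i) • x = 0)
    ?_ ?_ ?_ ?_ hx
  · intro x hxs
    rw [← Finset.mul_prod_erase s.attach c (Finset.mem_attach s ⟨x, hxs⟩), mul_comm, mul_smul,
      hckill ⟨x, hxs⟩, smul_zero]
  · exact smul_zero _
  · intro x y _ _ h1 h2; rw [smul_add, h1, h2, add_zero]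
  · intro r x _ h1; rw [smul_comm, h1, smul_zero]

end Lemma24

namespace Lemma24

variable {p : ℕ} [hp : Fact p.Prime]

local notation "K" => ℚ_[p]
local notation "Z0" => LinearMap.range (Algebra.linearMap ℤ_[p] ℚ_[p])
local notation "Qt" => (ℚ_[p] ⧸ LinearMap.range (Algebra.linearMap ℤ_[p] ℚ_[p]))

variable {A : Type} [AddCommGroup A] [Module ℤ_[p] A]

/-- A key consequence: a nonzero `C` can be upgraded to a power of `p`. -/
lemma exists_pow_killer {P : Submodule ℤ_[p] A} (hfg : P.FG)
    (htor : ∀ x ∈ P, ∃ c : ℤ_[p], c ≠ 0 ∧ c • x = 0) :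
    ∃ e : ℕ, ∀ x ∈ P, (p : ℤ_[p]) ^ e • x = 0 := by
  obtain ⟨C, hC0, hkill⟩ := exists_killer hfg htor
  obtain ⟨d, hd⟩ : ∃ d : ℤ_[p], d * C = (p : ℤ_[p]) ^ C.valuation := by
    refine ⟨((PadicInt.unitCoeff hC0)⁻¹ : ℤ_[p]ˣ), ?_⟩
    calc (((PadicInt.unitCoeff hC0)⁻¹ : ℤ_[p]ˣ) : ℤ_[p]) * C
        = ↑(PadicInt.unitCoeff hC0)⁻¹
          * (↑(PadicInt.unitCoeff hC0) * (p : ℤ_[p]) ^ C.valuation) := by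
          rw [← PadicInt.unitCoeff_spec hC0]
      _ = _ := Units.inv_mul_cancel_left _ _
  exact ⟨C.valuation, fun x hx => by rw [← hd, mul_smul, hkill x hx, smul_zero]⟩

lemma finite_of_fg_torsion (P : Submodule ℤ_[p] A) (hfg : P.FG)
    (htor : ∀ x ∈ P, ∃ c : ℤ_[p], c ≠ 0 ∧ c • x = 0) : (P : Set A).Finite := by
  classical
  obtain ⟨e, he⟩ := exists_pow_killer hfg htor
  obtain ⟨s, hs⟩ := hfg
  have hsub : (↑s : Set A) ⊆ P := by rw [← hs]; exact Submodule.subset_span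
  set F : (↥s → Fin (p ^ e)) → A := fun m => ∑ i ∈ s.attach, ((m i : ℕ)) • (i : A) with hF
  refine Set.Finite.subset (Set.finite_range F) ?_
  intro x hx
  have hx' : x ∈ Submodule.span ℤ_[p] (↑s : Set A) := by rw [hs]; exact hx
  obtain ⟨f, -, hf⟩ := Submodule.mem_span_finset.mp hx'
  refine ⟨fun i => ⟨(f i).appr e, PadicInt.appr_lt _ _⟩, ?_⟩
  rw [hF]
  simp only
  rw [Finset.sum_attach s (fun i => (((f i).appr e : ℕ)) • i)]
  rw [← hf]
  refine Finset.sum_congr rfl ?_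
  intro i hi
  rw [← Nat.cast_smul_eq_nsmul (R := ℤ_[p])]
  obtain ⟨d, hd⟩ := Ideal.mem_span_singleton'.mp (PadicInt.appr_spec e (f i))
  have : f i • i - (((f i).appr e : ℤ_[p])) • i = 0 := by
    rw [← sub_smul, ← hd, mul_smul, he i (hsub hi), smul_zero]
  exact (sub_eq_zero.mp this).symm

end Lemma24

namespace Lemma24

variable {p : ℕ} [hp : Fact p.Prime]

local notation "K" => ℚ_[p]
local notation "Z0" => LinearMap.range (Algebra.linearMap ℤ_[p] ℚ_[p])
local notation "Qt" => (ℚ_[p] ⧸ LinearMap.range (Algebra.linearMap ℤ_[p] ℚ_[p]))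

variable {A : Type} [AddCommGroup A] [Module ℤ_[p] A]

lemma algebraMap_smul_eq_zero_iff (c : ℤ_[p]) (hc : c ≠ 0) (w : K ⊗[ℤ_[p]] A) :
    c • w = 0 → w = 0 := by
  intro hw
  have h1 : (algebraMap ℤ_[p] K c) • w = 0 := by rwa [algebraMap_smul]
  have h2 : (algebraMap ℤ_[p] K c) ≠ 0 := by
    rw [PadicInt.algebraMap_apply]
    exact_mod_cast PadicInt.coe_ne_zero.mpr hc
  calc w = (algebraMap ℤ_[p] K c)⁻¹ • ((algebraMap ℤ_[p] K c) • w) := by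
          rw [smul_smul, inv_mul_cancel₀ h2, one_smul]
    _ = 0 := by rw [h1, smul_zero]

lemma piA_sigma_comm {G : Type} [Group G] (ρ : G →* (A ≃ₗ[ℤ_[p]] A)) (g : G)
    (w : K ⊗[ℤ_[p]] A) :
    piA A (LinearMap.baseChange K (ρ g).toLinearMap w)
      = LinearMap.lTensor Qt (ρ g).toLinearMap (piA A w) := by
  have h1 : LinearMap.baseChange K (ρ g).toLinearMap w
      = LinearMap.lTensor K (ρ g).toLinearMap w :=
    congrFun (LinearMap.baseChange_eq_ltensor (ρ g).toLinearMap) w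
  rw [piA, h1]
  have h2 := LinearMap.rTensor_comp_lTensor (R := ℤ_[p])
    (f := Submodule.mkQ Z0) (g := (ρ g).toLinearMap)
  have h3 := LinearMap.lTensor_comp_rTensor (R := ℤ_[p])
    (f := Submodule.mkQ Z0) (g := (ρ g).toLinearMap)
  rw [← LinearMap.comp_apply, h2, ← h3, LinearMap.comp_apply]

lemma forward {G : Type} [Group G] (ρ : G →* (A ≃ₗ[ℤ_[p]] A)) [Module.Finite ℤ_[p] A]
    (h : ∀ a : A, (∀ g : G, ρ g a = a) → IsOfFinAddOrder a) :
    {y : Qt ⊗[ℤ_[p]] A | ∀ g : G, LinearMap.lTensor Qt (ρ g).toLinearMap y = y}.Finite := by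
  classical
  set σ : G → ((K ⊗[ℤ_[p]] A) →ₗ[ℚ_[p]] (K ⊗[ℤ_[p]] A)) :=
    fun g => LinearMap.baseChange K (ρ g).toLinearMap with hσ
  set D : G → Submodule ℚ_[p] (K ⊗[ℤ_[p]] A) :=
    fun g => LinearMap.ker (σ g - LinearMap.id) with hD
  -- exponent killing ker θ
  have hT : ∀ x ∈ LinearMap.ker (theta (p := p) A), ∃ c : ℤ_[p], c ≠ 0 ∧ c • x = 0 :=
    fun x hx => (theta_eq_zero_iff x).mp hx
  obtain ⟨e, he⟩ := exists_pow_killer (IsNoetherian.noetherian _) hT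
  -- no nonzero invariants in W
  have hWbot : (⨅ g : G, D g) = ⊥ := by
    rw [eq_bot_iff]
    intro v hv
    rw [Submodule.mem_iInf] at hv
    have hinv : ∀ g : G, σ g v = v := by
      intro g
      have := hv g
      rw [hD, LinearMap.mem_ker, LinearMap.sub_apply, LinearMap.id_apply, sub_eq_zero] at this
      exact this
    by_contra hvne
    rw [Submodule.mem_bot] at hvne
    obtain ⟨n, b, hb⟩ := exists_pow_smul_mem_range_theta (p := p) v
    have hwinv : ∀ g : G, σ g ((p : ℤ_[p]) ^ n • v) = (p : ℤ_[p]) ^ n • v := by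
      intro g; rw [LinearMap.map_smul_of_tower, hinv]
    have hbinv : ∀ g : G, ρ g ((p : ℤ_[p]) ^ e • b) = (p : ℤ_[p]) ^ e • b := by
      intro g
      have h1 : theta (p := p) A (ρ g b - b) = 0 := by
        have h2 : theta (p := p) A (ρ g b) = σ g (theta (p := p) A b) := by
          rw [hσ]; simp only [theta_apply]
          rw [LinearMap.baseChange_tmul]
          rfl
        rw [map_sub, h2, hb, hwinv, ← hb, sub_self]
      have h3 := he _ h1
      rw [map_smul, ← sub_eq_zero, ← smul_sub]
      exact h3
    have hfin := h _ hbinv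
    obtain ⟨c, hc, hca⟩ := (isOfFinAddOrder_iff_torsion (p := p) _).mp hfin
    have hkill : (c * (p : ℤ_[p]) ^ e) • b = 0 := by
      rw [mul_smul]; exact hca
    have hθb : (c * (p : ℤ_[p]) ^ e) • theta (p := p) A b = 0 := by
      rw [← map_smul, hkill, map_zero]
    rw [hb] at hθb
    have hpne : (p : ℤ_[p]) ≠ 0 := Nat.cast_ne_zero.mpr hp.1.ne_zero
    have hv0 : v = 0 := by
      have h4 : ((c * (p : ℤ_[p]) ^ e) * (p : ℤ_[p]) ^ n) • v = 0 := by
        rw [mul_smul]; exact hθb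
      exact algebraMap_smul_eq_zero_iff _
        (by exact mul_ne_zero (mul_ne_zero hc (pow_ne_zero _ hpne)) (pow_ne_zero _ hpne)) v h4
    exact hvne hv0
  -- a minimal finite intersection is trivial
  obtain ⟨W₀, hW₀mem, hW₀min⟩ := IsArtinian.set_has_minimal (R := ℚ_[p]) (M := K ⊗[ℤ_[p]] A)
    {W' : Submodule ℚ_[p] (K ⊗[ℤ_[p]] A) | ∃ s : Finset G, W' = ⨅ g ∈ s, D g} ⟨⊤, ∅, by simp⟩
  obtain ⟨s₀, rfl⟩ := hW₀mem
  have hbot : (⨅ g ∈ s₀, D g) = ⊥ := by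
    have hle : ∀ g : G, (⨅ g' ∈ s₀, D g') ≤ D g := by
      intro g
      have hmem : (⨅ g' ∈ insert g s₀, D g')
          ∈ {W' : Submodule ℚ_[p] (K ⊗[ℤ_[p]] A) | ∃ s : Finset G, W' = ⨅ g ∈ s, D g} := ⟨insert g s₀, rfl⟩
      have heq : (⨅ g' ∈ insert g s₀, D g') = D g ⊓ ⨅ g' ∈ s₀, D g' :=
        Finset.iInf_insert g s₀ D
      have hle' : (⨅ g' ∈ insert g s₀, D g') ≤ ⨅ g' ∈ s₀, D g' := by
        rw [heq]; exact inf_le_right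
      have heq2 : (⨅ g' ∈ insert g s₀, D g') = ⨅ g' ∈ s₀, D g' := by
        by_contra hne
        exact hW₀min _ hmem (lt_of_le_of_ne hle' hne)
      calc (⨅ g' ∈ s₀, D g') = D g ⊓ ⨅ g' ∈ s₀, D g' := by rw [← heq, heq2]
        _ ≤ D g := inf_le_left
    have : (⨅ g' ∈ s₀, D g') ≤ ⨅ g : G, D g := le_iInf hle
    rw [hWbot, le_bot_iff] at this
    exact this
  -- injective map φ with left inverse ψ
  set φ : (K ⊗[ℤ_[p]] A) →ₗ[ℚ_[p]] (↥s₀ → (K ⊗[ℤ_[p]] A)) := LinearMap.pi (fun g : ↥s₀ => σ g - LinearMap.id) with hφ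
  have hkerφ : LinearMap.ker φ = ⊥ := by
    rw [hφ, LinearMap.ker_pi, ← hbot]
    ext v
    simp only [Submodule.mem_iInf, hD, Subtype.forall]
  obtain ⟨ψ, hψ⟩ := φ.exists_leftInverse_of_injective hkerφ
  -- the finitely generated bound
  have hrangefg : (LinearMap.range (theta (p := p) A)).FG := by
    rw [LinearMap.range_eq_map]
    exact Submodule.FG.map _ Module.Finite.fg_top
  set N : Submodule ℤ_[p] (K ⊗[ℤ_[p]] A) := Submodule.map (ψ.restrictScalars ℤ_[p])
    (Submodule.pi Set.univ fun _ : ↥s₀ => LinearMap.range (theta (p := p) A)) with hN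
  have hNfg : N.FG := Submodule.FG.map _ (Submodule.fg_pi fun _ => hrangefg)
  set N' : Submodule ℤ_[p] (Qt ⊗[ℤ_[p]] A) := Submodule.map (piA A) N with hN'
  have hN'fg : N'.FG := Submodule.FG.map _ hNfg
  have hN'fin : ((N' : Set (Qt ⊗[ℤ_[p]] A))).Finite := by
    refine finite_of_fg_torsion _ hN'fg ?_
    intro x _
    obtain ⟨n, hn⟩ := exists_pow_smul_eq_zero_Qt (p := p) x
    exact ⟨(p : ℤ_[p]) ^ n, pow_ne_zero _ (Nat.cast_ne_zero.mpr hp.1.ne_zero), hn⟩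
  refine Set.Finite.subset hN'fin ?_
  intro x hx
  obtain ⟨v, rfl⟩ := piA_surjective (p := p) (A := A) x
  have hvmem : φ v ∈ Submodule.pi Set.univ fun _ : ↥s₀ => LinearMap.range (theta (p := p) A) := by
    rw [Submodule.mem_pi]
    intro g _
    have h1 : piA A (σ (g : G) v - v) = 0 := by
      rw [map_sub, piA_sigma_comm ρ (g : G) v, hx (g : G), sub_self]
    have h2 : σ (g : G) v - v ∈ LinearMap.ker (piA A) := h1
    rw [ker_piA] at h2
    simpa [hφ, LinearMap.pi_apply, LinearMap.sub_apply, LinearMap.id_apply] using h2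
  have hvN : v ∈ N := by
    refine ⟨φ v, hvmem, ?_⟩
    have := LinearMap.congr_fun hψ v
    exact this
  exact ⟨v, hvN, rfl⟩

end Lemma24

namespace Lemma24

variable {p : ℕ} [hp : Fact p.Prime]

local notation "K" => ℚ_[p]
local notation "Z0" => LinearMap.range (Algebra.linearMap ℤ_[p] ℚ_[p])
local notation "Qt" => (ℚ_[p] ⧸ LinearMap.range (Algebra.linearMap ℤ_[p] ℚ_[p]))

variable {A : Type} [AddCommGroup A] [Module ℤ_[p] A]

lemma norm_pow_sub_one_eq_one {k : ℕ} (hk : 1 ≤ k) : ‖(p:ℤ_[p])^k - 1‖ = 1 := by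
  have hnormp : ‖(p:ℤ_[p])^k‖ < 1 := by
    rw [PadicInt.norm_p_pow, zpow_neg, zpow_natCast,
      inv_lt_one₀ (by exact_mod_cast pow_pos hp.1.pos k)]
    exact one_lt_pow₀ (by exact_mod_cast hp.1.one_lt) (by omega)
  have hle : ‖(p:ℤ_[p])^k - 1‖ ≤ 1 := PadicInt.norm_le_one _
  refine le_antisymm hle ?_
  by_contra hne
  push_neg at hne
  have h8 : ‖(p:ℤ_[p])^k + (-((p:ℤ_[p])^k - 1))‖ ≤
      max ‖(p:ℤ_[p])^k‖ ‖-((p:ℤ_[p])^k - 1)‖ := PadicInt.nonarchimedean _ _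
  rw [norm_neg] at h8
  have h9 : (p:ℤ_[p])^k + (-((p:ℤ_[p])^k - 1)) = 1 := by ring
  rw [h9, norm_one] at h8
  have h10 := max_lt hnormp hne
  linarith [le_trans h8 (le_of_lt h10)]

lemma backward {G : Type} [Group G] (ρ : G →* (A ≃ₗ[ℤ_[p]] A)) [Module.Finite ℤ_[p] A]
    (a : A) (hinv : ∀ g : G, ρ g a = a) (hord : ¬ IsOfFinAddOrder a) :
    {y : Qt ⊗[ℤ_[p]] A | ∀ g : G, LinearMap.lTensor Qt (ρ g).toLinearMap y = y}.Infinite := by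
  classical
  have hpK : (p : K) ≠ 0 := by exact_mod_cast hp.1.ne_zero
  have hpR : (p : ℤ_[p]) ≠ 0 := Nat.cast_ne_zero.mpr hp.1.ne_zero
  -- exponent killing the kernel of θ
  have hT : ∀ x ∈ LinearMap.ker (theta (p := p) A), ∃ c : ℤ_[p], c ≠ 0 ∧ c • x = 0 :=
    fun x hx => (theta_eq_zero_iff x).mp hx
  obtain ⟨e, he⟩ := exists_pow_killer (IsNoetherian.noetherian _) hT
  -- Krull intersection in A ⧸ ker θ
  haveI : Module.Finite ℤ_[p] (A ⧸ LinearMap.ker (theta (p := p) A)) :=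
    Module.Finite.of_surjective _ (Submodule.mkQ_surjective _)
  have hI : (Ideal.span {(p:ℤ_[p])} : Ideal ℤ_[p]) ≠ ⊤ := by
    intro hcon
    exact mem_nonunits_iff.mp PadicInt.p_nonunit (Ideal.span_singleton_eq_top.mp hcon)
  have hKrull := Ideal.iInf_pow_smul_eq_bot_of_isLocalRing
    (I := Ideal.span {(p:ℤ_[p])}) (M := A ⧸ LinearMap.ker (theta (p := p) A)) hI
  have habar : (Submodule.mkQ (LinearMap.ker (theta (p := p) A))) a ≠ 0 := by
    intro hcon
    rw [Submodule.mkQ_apply, Submodule.Quotient.mk_eq_zero] at hcon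
    exact hord ((isOfFinAddOrder_iff_torsion (p := p) a).mpr ((theta_eq_zero_iff a).mp hcon))
  obtain ⟨n₀, hn₀⟩ : ∃ n₀ : ℕ, (Submodule.mkQ (LinearMap.ker (theta (p := p) A))) a ∉
      (Ideal.span {(p:ℤ_[p])}) ^ n₀ • (⊤ : Submodule ℤ_[p] (A ⧸ LinearMap.ker (theta (p := p) A))) := by
    by_contra hall
    push_neg at hall
    refine habar ?_
    rw [← Submodule.mem_bot ℤ_[p], ← hKrull, Submodule.mem_iInf]
    exact hall
  -- the family of invariant elements
  set y : ℕ → (Qt ⊗[ℤ_[p]] A) :=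
    fun n => (Submodule.mkQ Z0 (((p:K)^n)⁻¹)) ⊗ₜ[ℤ_[p]] a with hy
  have hymem : ∀ n, y n ∈ {y : Qt ⊗[ℤ_[p]] A |
      ∀ g : G, LinearMap.lTensor Qt (ρ g).toLinearMap y = y} := by
    intro n g
    rw [hy]
    simp only [LinearMap.lTensor_tmul]
    rw [show (ρ g).toLinearMap a = a from hinv g]
  -- distinctness
  have hkey : ∀ m n : ℕ, m < n → n₀ < n → y m ≠ y n := by
    intro m n hmn hn₀n hy_eq
    -- reduce to an element of the kernel of piA
    set z : K := ((p:K)^m)⁻¹ - ((p:K)^n)⁻¹ with hz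
    have h1 : piA A (z ⊗ₜ[ℤ_[p]] a) = 0 := by
      rw [piA, LinearMap.rTensor_tmul, hz, map_sub, TensorProduct.sub_tmul]
      rw [show (Submodule.mkQ Z0 (((p:K)^m)⁻¹)) ⊗ₜ[ℤ_[p]] a = y m from rfl,
        show (Submodule.mkQ Z0 (((p:K)^n)⁻¹)) ⊗ₜ[ℤ_[p]] a = y n from rfl, hy_eq, sub_self]
    have h2 : z ⊗ₜ[ℤ_[p]] a ∈ LinearMap.ker (piA A) := h1
    rw [ker_piA] at h2
    obtain ⟨b, hb⟩ := h2
    -- multiply by p^n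
    set u' : ℤ_[p] := (p:ℤ_[p])^(n-m) - 1 with hu'
    have hzu : (p:ℤ_[p])^n • (z ⊗ₜ[ℤ_[p]] a) = (algebraMap ℤ_[p] K u') ⊗ₜ[ℤ_[p]] a := by
      rw [TensorProduct.smul_tmul']
      congr 1
      rw [smul_padic, PadicInt.algebraMap_apply, hu', hz]
      push_cast
      rw [mul_sub, mul_inv_cancel₀ (pow_ne_zero _ hpK), ← div_eq_mul_inv,
        pow_sub₀ _ hpK hmn.le, div_eq_mul_inv]
    have htheta_u : (algebraMap ℤ_[p] K u') ⊗ₜ[ℤ_[p]] a = theta (p := p) A (u' • a) := by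
      rw [theta_apply, TensorProduct.tmul_smul, TensorProduct.smul_tmul',
        Algebra.smul_def, mul_one]
    have h3 : theta (p := p) A (u' • a) = theta (p := p) A ((p:ℤ_[p])^n • b) := by
      rw [← htheta_u, ← hzu, ← hb, ← map_smul]
    have h4 : u' • a - (p:ℤ_[p])^n • b ∈ LinearMap.ker (theta (p := p) A) := by
      rw [LinearMap.mem_ker, map_sub, h3, sub_self]
    have ht := he _ h4
    rw [smul_sub, sub_eq_zero] at ht
    -- u' is a unit
    have hu1 : IsUnit u' := PadicInt.isUnit_iff.mpr (norm_pow_sub_one_eq_one (by omega))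
    set u : ℤ_[p]ˣ := hu1.unit with hudef
    have huu : (u : ℤ_[p]) = u' := hu1.unit_spec
    -- p^e • a = (u⁻¹ * p^e * p^n) • b
    have h5 : ((p:ℤ_[p])^e) • a = ((↑u⁻¹ : ℤ_[p]) * ((p:ℤ_[p])^e * (p:ℤ_[p])^n)) • b := by
      have h6 : ((↑u⁻¹ : ℤ_[p]) * ((p:ℤ_[p])^e * u')) • a
          = ((↑u⁻¹ : ℤ_[p]) * ((p:ℤ_[p])^e * (p:ℤ_[p])^n)) • b := by
        rw [mul_smul, mul_smul, ht, smul_smul, smul_smul, mul_assoc]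
      rw [← h6]
      congr 1
      rw [← huu, mul_comm ((p:ℤ_[p])^e) (↑u : ℤ_[p]), ← mul_assoc,
        Units.inv_mul, one_mul]
    -- a ≡ p^n • d mod ker θ
    set d : A := ((↑u⁻¹ : ℤ_[p]) * (p:ℤ_[p])^n) • b with hd
    have h7 : a - (p:ℤ_[p])^n • ((↑u⁻¹ : ℤ_[p]) • b) ∈ LinearMap.ker (theta (p := p) A) := by
      rw [LinearMap.mem_ker]
      refine (theta_eq_zero_iff _).mpr ⟨(p:ℤ_[p])^e, pow_ne_zero _ hpR, ?_⟩
      have hcomb : (p:ℤ_[p])^e • ((p:ℤ_[p])^n • ((↑u⁻¹ : ℤ_[p]) • b))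
          = ((↑u⁻¹ : ℤ_[p]) * ((p:ℤ_[p])^e * (p:ℤ_[p])^n)) • b := by
        rw [smul_smul, smul_smul]; congr 1; ring
      rw [smul_sub, h5, hcomb, sub_self]
    have h8 : (Submodule.mkQ (LinearMap.ker (theta (p := p) A))) a
        = (p:ℤ_[p])^n • (Submodule.mkQ (LinearMap.ker (theta (p := p) A))
            ((↑u⁻¹ : ℤ_[p]) • b)) := by
      rw [← map_smul, Submodule.mkQ_apply, Submodule.mkQ_apply, Submodule.Quotient.eq]
      exact h7
    have h9 : (Submodule.mkQ (LinearMap.ker (theta (p := p) A))) a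
        ∈ (Ideal.span {(p:ℤ_[p])}) ^ n₀ •
          (⊤ : Submodule ℤ_[p] (A ⧸ LinearMap.ker (theta (p := p) A))) := by
      have h10 : (Submodule.mkQ (LinearMap.ker (theta (p := p) A))) a
          ∈ (Ideal.span {(p:ℤ_[p])}) ^ n •
            (⊤ : Submodule ℤ_[p] (A ⧸ LinearMap.ker (theta (p := p) A))) := by
        rw [h8]
        exact Submodule.smul_mem_smul
          (Ideal.pow_mem_pow (Ideal.mem_span_singleton_self _) n) Submodule.mem_top
      exact Submodule.smul_mono_left (Ideal.pow_le_pow_right hn₀n.le) h10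
    exact hn₀ h9
  -- conclude
  refine Set.infinite_of_injective_forall_mem
    (f := fun k : ℕ => y (n₀ + 1 + k)) ?_ (fun k => hymem _)
  intro k l hkl
  by_contra hne
  rcases Nat.lt_or_ge k l with h | h
  · exact hkey _ _ (by omega) (by omega) hkl
  · have hlk : l < k := by omega
    exact hkey _ _ (by omega) (by omega) hkl.symm

end Lemma24

namespace Lemma24

variable {p : ℕ} [hp : Fact p.Prime]

lemma comm_rTensor_apply {M N M' : Type} [AddCommGroup M] [AddCommGroup N] [AddCommGroup M']
    [Module ℤ_[p] M] [Module ℤ_[p] N] [Module ℤ_[p] M'] (f : M →ₗ[ℤ_[p]] M')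
    (x : M ⊗[ℤ_[p]] N) :
    TensorProduct.comm ℤ_[p] M' N (LinearMap.rTensor N f x)
      = LinearMap.lTensor N f (TensorProduct.comm ℤ_[p] M N x) := by
  induction x using TensorProduct.induction_on with
  | zero => simp
  | tmul a q => simp
  | add x y hx hy => simp [map_add, hx, hy]

end Lemma24


/-- **Lemma 2.4.** Let `A` be a finitely generated `ℤ_p`-module with a `ℤ_p`-linear
action of a group `G` (given by `ρ`), and let `G` act on `A ⊗[ℤ_p] (ℚ_p/ℤ_p)` through
the first factor. Then the set of `G`-invariant elements of `A ⊗[ℤ_p] (ℚ_p/ℤ_p)` is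
infinite if and only if `A^G` contains an element of infinite order. -/
theorem stmt0 {p : ℕ} [Fact p.Prime]
    (A : Type) [AddCommGroup A] [Module ℤ_[p] A] [Module.Finite ℤ_[p] A]
    {G : Type} [Group G] (ρ : G →* (A ≃ₗ[ℤ_[p]] A)) :
    {x : A ⊗[ℤ_[p]] (ℚ_[p] ⧸ LinearMap.range (Algebra.linearMap ℤ_[p] ℚ_[p])) |
        ∀ g : G, LinearMap.rTensor
          (ℚ_[p] ⧸ LinearMap.range (Algebra.linearMap ℤ_[p] ℚ_[p])) (ρ g).toLinearMap x = x}.Infinite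
      ↔ ∃ a : A, (∀ g : G, ρ g a = a) ∧ ¬ IsOfFinAddOrder a := by
  set Qt := ℚ_[p] ⧸ LinearMap.range (Algebra.linearMap ℤ_[p] ℚ_[p]) with hQt
  set e := TensorProduct.comm ℤ_[p] A Qt with he
  set S : Set (A ⊗[ℤ_[p]] Qt) :=
    {x | ∀ g : G, LinearMap.rTensor Qt (ρ g).toLinearMap x = x} with hS
  set S' : Set (Qt ⊗[ℤ_[p]] A) :=
    {y | ∀ g : G, LinearMap.lTensor Qt (ρ g).toLinearMap y = y} with hS'
  have himg : (⇑e '' S) = S' := by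
    ext y
    constructor
    · rintro ⟨x, hx, rfl⟩
      intro g
      rw [← Lemma24.comm_rTensor_apply (ρ g).toLinearMap x, hx g]
    · intro hy
      refine ⟨e.symm y, ?_, by simp⟩
      intro g
      apply e.injective
      rw [Lemma24.comm_rTensor_apply (ρ g).toLinearMap (e.symm y)]
      rw [LinearEquiv.apply_symm_apply]
      exact hy g
  have hiff : S.Infinite ↔ S'.Infinite := by
    rw [← himg, Set.infinite_image_iff e.injective.injOn]
  rw [hiff]
  constructor
  · intro hinf
    by_contra hno
    push_neg at hno
    exact hinf (Lemma24.forward ρ hno)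
  · rintro ⟨a, ha, hord⟩
    exact Lemma24.backward ρ a ha hord
end

section
/- Let V be a finite-dimensional vector space over a field F, let Γ be a group acting on V by linear automorphisms, and let N be a normal subgroup of Γ. Suppose γ₁, γ₂ ∈ Γ lie in the same coset of N (i.e. γ₁⁻¹γ₂ ∈ N) and the characteristic polynomials of the actions of γ₁ and γ₂ on V are coprime in F[X]. Then the subspace of N-fixed vectors V^N = {v ∈ V : n·v = v for all n ∈ N} is zero. -/
lemma aux_aeval_restrict (F : Type*) [Field F] (V : Type*) [AddCommGroup V] [Module F V]
    (f : V →ₗ[F] V) (W : Submodule F V) (h : ∀ x ∈ W, f x ∈ W) (p : Polynomial F) (w : W) :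
    (Polynomial.aeval (f.restrict h) p w : V) = Polynomial.aeval f p (w : V) := by
  rw [Polynomial.aeval_eq_sum_range, Polynomial.aeval_eq_sum_range]
  simp only [LinearMap.coe_sum, Finset.sum_apply, LinearMap.smul_apply,
    Submodule.coe_sum, SetLike.val_smul]
  refine Finset.sum_congr rfl fun i _ => ?_
  rw [Module.End.pow_restrict, LinearMap.restrict_apply]

/-- Let `Γ` act on a finite-dimensional `F`-vector space `V` by linear automorphisms
(via `ρ`), let `N` be a normal subgroup of `Γ`, and let `γ₁, γ₂ ∈ Γ` lie in the same
coset of `N`. If the characteristic polynomials of the actions of `γ₁` and `γ₂` on `V`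
are coprime, then the subspace of `N`-fixed vectors is zero. -/
theorem stmt5 (F : Type*) [Field F] (V : Type*) [AddCommGroup V] [Module F V]
    [FiniteDimensional F V]
    (Γ : Type*) [Group Γ] (ρ : Γ →* (V ≃ₗ[F] V))
    (N : Subgroup Γ) [N.Normal] (γ₁ γ₂ : Γ) (hcoset : γ₁⁻¹ * γ₂ ∈ N)
    (hcop : IsCoprime (LinearMap.charpoly (ρ γ₁).toLinearMap)
      (LinearMap.charpoly (ρ γ₂).toLinearMap)) :
    ∀ v : V, (∀ n ∈ N, ρ n v = v) → v = 0 := by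
  -- the submodule of N-fixed vectors
  set W : Submodule F V :=
    { carrier := {v | ∀ n ∈ N, ρ n v = v}
      add_mem' := fun {a b} ha hb n hn => by simp [map_add, ha n hn, hb n hn]
      zero_mem' := fun n hn => by simp
      smul_mem' := fun c a ha n hn => by simp [map_smul, ha n hn] } with hWdef
  have hmem : ∀ v : V, v ∈ W ↔ ∀ n ∈ N, ρ n v = v := fun v => Iff.rfl
  -- W is stable under every ρ γ
  have hstab : ∀ γ : Γ, ∀ v ∈ W, (ρ γ).toLinearMap v ∈ W := by
    intro γ v hv n hn
    have h' : γ⁻¹ * n * γ ∈ N := Subgroup.Normal.conj_mem' ‹N.Normal› n hn γ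
    have := hv _ h'
    have hg : γ * (γ⁻¹ * n * γ) = n * γ := by group
    calc ρ n ((ρ γ) v) = ρ (n * γ) v := by rw [map_mul]; rfl
      _ = ρ γ (ρ (γ⁻¹ * n * γ) v) := by rw [← hg, map_mul]; rfl
      _ = ρ γ v := by rw [this]
  set f₁ := (ρ γ₁).toLinearMap with hf₁
  set f₂ := (ρ γ₂).toLinearMap with hf₂
  -- f₁ and f₂ agree on W
  have hagree : ∀ v ∈ W, f₁ v = f₂ v := by
    intro v hv
    have hg : γ₁ * (γ₁⁻¹ * γ₂) = γ₂ := by group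
    have : ρ γ₂ v = ρ γ₁ (ρ (γ₁⁻¹ * γ₂) v) := by
      conv_lhs => rw [← hg]
      rw [map_mul]; rfl
    rw [hv _ hcoset] at this
    simp [hf₁, hf₂, this]
  intro v hv
  have hvW : v ∈ W := hv
  obtain ⟨a, b, hab⟩ := hcop
  set w : W := ⟨v, hvW⟩ with hw
  -- apply a•p₁ + b•p₂ = 1 to w
  have key : (Polynomial.aeval f₁ (a * f₁.charpoly)) v
      + (Polynomial.aeval f₂ (b * f₂.charpoly)) v = v := by
    have h1 : (Polynomial.aeval (f₁.restrict (hstab γ₁)) (a * f₁.charpoly) w : V)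
        = Polynomial.aeval f₁ (a * f₁.charpoly) v := aux_aeval_restrict F V f₁ W _ _ w
    have h2 : (Polynomial.aeval (f₂.restrict (hstab γ₂)) (b * f₂.charpoly) w : V)
        = Polynomial.aeval f₂ (b * f₂.charpoly) v := aux_aeval_restrict F V f₂ W _ _ w
    have hres : f₁.restrict (hstab γ₁) = f₂.restrict (hstab γ₂) := by
      ext x
      simp [LinearMap.restrict_apply, hagree x x.2]
    rw [← h1, ← h2, hres, ← Submodule.coe_add, ← LinearMap.add_apply, ← map_add, hab]
    simp [hw]
  have e1 : (Polynomial.aeval f₁ (a * f₁.charpoly)) v = 0 := by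
    rw [map_mul]
    simp [f₁.aeval_self_charpoly]
  have e2 : (Polynomial.aeval f₂ (b * f₂.charpoly)) v = 0 := by
    rw [map_mul]
    simp [f₂.aeval_self_charpoly]
  rw [e1, e2, add_zero] at key
  exact key.symm
end
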